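/- If a nonnegative function f : [0,T] → ℝ satisfies f(t) ≤ a·t³ + b·t·∫₀ᵗ f(s) ds for all t in [0,T], where a, b ≥ 0, then f(t) ≤ a·t³·exp(b·t²) for all t in [0,T]. -/

import Mathlib

theorem gronwall_cubic_bound
    (f : ℝ → ℝ) (T a b : ℝ)
    (hT : 0 ≤ T) (ha : 0 ≤ a) (hb : 0 ≤ b)
    (hcont : ContinuousOn f (Set.Icc 0 T))
    (hnonneg : ∀ t ∈ Set.Icc 0 T, 0 ≤ f t)
    (hineq : ∀ t ∈ Set.Icc 0 T, f t ≤ a * t ^ 3 + b * t * ∫ s in (0:ℝ)..t, f s) :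
    ∀ t ∈ Set.Icc 0 T, f t ≤ a * t ^ 3 * Real.exp (b * t ^ 2) := by
  intro t₀ ht₀
  obtain ⟨ht0, htT⟩ := ht₀
  -- extend f continuously to all of ℝ
  set g : ℝ → ℝ := fun s => f ((Set.projIcc 0 T hT s : Set.Icc 0 T) : ℝ) with hgdef
  have hgc : Continuous g := by
    apply hcont.comp_continuous (continuous_subtype_val.comp continuous_projIcc)
    exact fun x => (Set.projIcc 0 T hT x).2
  have hgeq : ∀ s ∈ Set.Icc 0 T, g s = f s := by
    intro s hs
    simp [hgdef, Set.projIcc_of_mem hT hs]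
  have hgnn : ∀ s, 0 ≤ g s := fun s => hnonneg _ (Set.projIcc 0 T hT s).2
  set G : ℝ → ℝ := fun u => ∫ s in (0:ℝ)..u, g s with hGdef
  have hGnn : ∀ u, 0 ≤ u → 0 ≤ G u := fun u hu =>
    intervalIntegral.integral_nonneg hu (fun s _ => hgnn s)
  have hGderiv : ∀ x ∈ Set.Ico 0 t₀, HasDerivWithinAt G (g x) (Set.Ici x) x := by
    intro x _
    exact ((hgc.integral_hasStrictDerivAt 0 x).hasDerivAt).hasDerivWithinAt
  have hGint : ∀ u ∈ Set.Icc 0 t₀, G u = ∫ s in (0:ℝ)..u, f s := by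
    intro u hu
    apply intervalIntegral.integral_congr
    intro s hs
    rw [Set.uIcc_of_le hu.1] at hs
    exact hgeq s ⟨hs.1, hs.2.trans (hu.2.trans htT)⟩
  have hbound : ∀ x ∈ Set.Ico 0 t₀, ‖g x‖ ≤ (b * t₀) * ‖G x‖ + a * t₀ ^ 3 := by
    intro x hx
    rw [Real.norm_of_nonneg (hgnn x), Real.norm_of_nonneg (hGnn x hx.1)]
    have hxT : x ∈ Set.Icc 0 T := ⟨hx.1, hx.2.le.trans htT⟩
    have h1 : g x ≤ a * x ^ 3 + b * x * G x := by
      rw [hgeq x hxT, hGint x ⟨hx.1, hx.2.le⟩]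
      exact hineq x hxT
    have h2 : a * x ^ 3 ≤ a * t₀ ^ 3 := by
      apply mul_le_mul_of_nonneg_left (pow_le_pow_left₀ hx.1 hx.2.le 3) ha
    have h3 : b * x * G x ≤ b * t₀ * G x :=
      mul_le_mul_of_nonneg_right (by nlinarith [hx.1, hx.2.le]) (hGnn x hx.1)
    linarith
  have hGcont : ContinuousOn G (Set.Icc 0 t₀) :=
    (intervalIntegral.continuous_primitive hgc.intervalIntegrable 0).continuousOn
  have hG0 : ‖G 0‖ ≤ 0 := by simp [hGdef]
  have key := norm_le_gronwallBound_of_norm_deriv_right_le hGcont hGderiv hG0 hbound t₀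
      ⟨ht0, le_refl _⟩
  rw [Real.norm_of_nonneg (hGnn t₀ ht0), sub_zero] at key
  have hmain : f t₀ ≤ a * t₀ ^ 3 + b * t₀ * G t₀ := by
    rw [hGint t₀ ⟨ht0, le_refl _⟩]
    exact hineq t₀ ⟨ht0, htT⟩
  rcases eq_or_lt_of_le (mul_nonneg hb ht0) with hK0 | hKpos
  · -- b * t₀ = 0
    have : b * t₀ ^ 2 = 0 := by nlinarith
    rw [this, Real.exp_zero, mul_one]
    nlinarith [hGnn t₀ ht0]
  · -- b * t₀ > 0
    rw [gronwallBound_of_K_ne_0 hKpos.ne'] at key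
    have hKt : b * t₀ * t₀ = b * t₀ ^ 2 := by ring
    have hbt : b * t₀ * G t₀ ≤ a * t₀ ^ 3 * (Real.exp (b * t₀ ^ 2) - 1) := by
      have := mul_le_mul_of_nonneg_left key (le_of_lt hKpos)
      calc b * t₀ * G t₀ ≤ b * t₀ * (0 * Real.exp (b * t₀ * t₀) +
            a * t₀ ^ 3 / (b * t₀) * (Real.exp (b * t₀ * t₀) - 1)) := this
        _ = a * t₀ ^ 3 * (Real.exp (b * t₀ ^ 2) - 1) := by
            rw [zero_mul, zero_add, hKt]
            field_simp [show b ≠ 0 by rintro rfl; simp at hKpos]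
    calc f t₀ ≤ a * t₀ ^ 3 + b * t₀ * G t₀ := hmain
      _ ≤ a * t₀ ^ 3 + a * t₀ ^ 3 * (Real.exp (b * t₀ ^ 2) - 1) := by linarith
      _ = a * t₀ ^ 3 * Real.exp (b * t₀ ^ 2) := by ring
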